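/- The map f : A → 𝒱* into the dual space of 𝒱 defined by f(v) := (g_v(v,·))|_𝒱 is smooth, its Fréchet derivative at each v ∈ A is the surjective linear map u ↦ (g_v(u,·))|_𝒱, and the set of horizontal vectors equals f⁻¹(0). (Hence the set ℋ of horizontal admissible vectors is a smooth submanifold of V of codimension r = dim 𝒱, and its tangent space at v is the set of g_v-horizontal vectors.) -/

import Mathlib

set_option synthInstance.maxHeartbeats 1000000
set_option maxHeartbeats 1000000

/-- Pseudo-Finsler data on a real normed vector space `V`. -/
structure PseudoFinslerData (V : Type*) [NormedAddCommGroup V] [NormedSpace ℝ V] where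
  A : Set V
  L : V → ℝ
  g : V → V →ₗ[ℝ] V →ₗ[ℝ] ℝ
  A_ne_zero : ∀ v ∈ A, v ≠ 0
  A_open : IsOpen A
  A_cone : ∀ v ∈ A, ∀ c : ℝ, 0 < c → c • v ∈ A
  L_smooth : ContDiffOn ℝ (⊤ : ℕ∞) L A
  L_homog : ∀ v ∈ A, ∀ c : ℝ, 0 < c → L (c • v) = c ^ 2 * L v
  g_def : ∀ v ∈ A, ∀ e h : V,
    g v e h = (1 / 2) * deriv (fun s : ℝ => deriv (fun t : ℝ => L (v + s • e + t • h)) 0) 0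
  g_symm : ∀ v ∈ A, ∀ e h : V, g v e h = g v h e
  g_nondeg : ∀ v ∈ A, ∀ e : V, (∀ h : V, g v e h = 0) → e = 0

/-- The claimed Fréchet derivative of `f(v) = (g_v(v,·))|_𝒱` at `v`: the linear map
`u ↦ (g_v(u,·))|_𝒱` into the (continuous) dual of `𝒱`. -/
noncomputable def fDeriv {V : Type*}
    [NormedAddCommGroup V] [NormedSpace ℝ V] [FiniteDimensional ℝ V]
    (D : PseudoFinslerData V) (𝒱 : Submodule ℝ V) (v : V) : V →ₗ[ℝ] (𝒱 →L[ℝ] ℝ) where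
  toFun u := LinearMap.toContinuousLinearMap ((D.g v u).domRestrict 𝒱)
  map_add' u u' := by ext w; simp
  map_smul' c u := by ext w; simp

set_option linter.unusedSectionVars false
section Aux
variable {V : Type*} [NormedAddCommGroup V] [NormedSpace ℝ V] [FiniteDimensional ℝ V]
  (D : PseudoFinslerData V)

theorem PF.contDiffAt {v : V} (hv : v ∈ D.A) : ContDiffAt ℝ (⊤ : ℕ∞) D.L v :=
  D.L_smooth.contDiffAt (D.A_open.mem_nhds hv)

theorem PF.line_hasDerivAt (x e : V) (s : ℝ) :
    HasDerivAt (fun t : ℝ => x + t • e) e s := by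
  simpa using ((hasDerivAt_id s).smul_const e).const_add x

theorem PF.inner_deriv {x : V} (hx : x ∈ D.A) (h : V) :
    deriv (fun t : ℝ => D.L (x + t • h)) 0 = fderiv ℝ D.L x h := by
  have h1 : HasFDerivAt D.L (fderiv ℝ D.L x) (x + (0:ℝ) • h) := by
    simpa using ((PF.contDiffAt D hx).differentiableAt (by simp)).hasFDerivAt
  have h2 := PF.line_hasDerivAt x h 0
  exact (h1.comp_hasDerivAt 0 h2).deriv

theorem PF.outer_hasDerivAt {v : V} (hv : v ∈ D.A) (e : V) :
    HasDerivAt (fun s : ℝ => fderiv ℝ D.L (v + s • e))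
      (fderiv ℝ (fderiv ℝ D.L) v e) 0 := by
  have hF : HasFDerivAt (fderiv ℝ D.L) (fderiv ℝ (fderiv ℝ D.L) v) (v + (0:ℝ) • e) := by
    have h0 : ContDiffAt ℝ (⊤ : ℕ∞) (fderiv ℝ D.L) v :=
      (PF.contDiffAt D hv).fderiv_right (mod_cast le_top)
    simpa using (h0.differentiableAt (by simp)).hasFDerivAt
  have h2 := PF.line_hasDerivAt v e 0
  exact hF.comp_hasDerivAt 0 h2

theorem PF.g_eq_second_fderiv {v : V} (hv : v ∈ D.A) (e h : V) :
    D.g v e h = (1 / 2) * (fderiv ℝ (fderiv ℝ D.L) v e h) := by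
  rw [D.g_def v hv e h]
  congr 1
  have hmem : ∀ᶠ s : ℝ in nhds 0, v + s • e ∈ D.A := by
    have hc : Continuous fun s : ℝ => v + s • e := by continuity
    have : (fun s : ℝ => v + s • e) ⁻¹' D.A ∈ nhds (0:ℝ) :=
      hc.continuousAt.preimage_mem_nhds (D.A_open.mem_nhds (by simpa using hv))
    exact this
  have heq : (fun s : ℝ => deriv (fun t : ℝ => D.L (v + s • e + t • h)) 0)
      =ᶠ[nhds (0:ℝ)] fun s : ℝ => fderiv ℝ D.L (v + s • e) h := by
    filter_upwards [hmem] with s hs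
    exact PF.inner_deriv D hs h
  rw [heq.deriv_eq]
  have h1 := PF.outer_hasDerivAt D hv e
  have h2 : HasDerivAt (fun s : ℝ => fderiv ℝ D.L (v + s • e) h)
      (fderiv ℝ (fderiv ℝ D.L) v e h) 0 := by
    simpa using h1.clm_apply (hasDerivAt_const 0 h)
  exact h2.deriv

theorem PF.fderiv_homog {v : V} (hv : v ∈ D.A) {c : ℝ} (hc : 0 < c) :
    fderiv ℝ D.L (c • v) = c • fderiv ℝ D.L v := by
  have hcv : c • v ∈ D.A := D.A_cone v hv c hc
  have h1 : HasFDerivAt D.L (fderiv ℝ D.L (c • v)) (c • v) :=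
    ((PF.contDiffAt D hcv).differentiableAt (by simp)).hasFDerivAt
  have hsc : HasFDerivAt (fun x : V => c • x) (c • ContinuousLinearMap.id ℝ V) v := by
    exact (hasFDerivAt_id v).const_smul c
  have h2 : HasFDerivAt (fun x => D.L (c • x))
      ((fderiv ℝ D.L (c • v)).comp (c • ContinuousLinearMap.id ℝ V)) v :=
    h1.comp v hsc
  have h3 : HasFDerivAt (fun x => c ^ 2 * D.L x) ((c ^ 2) • fderiv ℝ D.L v) v := by
    exact (((PF.contDiffAt D hv).differentiableAt
      (by simp)).hasFDerivAt).const_smul (c ^ 2)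
  have heq : (fun x => c ^ 2 * D.L x) =ᶠ[nhds v] (fun x => D.L (c • x)) := by
    filter_upwards [D.A_open.mem_nhds hv] with x hx
    exact (D.L_homog x hx c hc).symm
  have h4 : HasFDerivAt (fun x => D.L (c • x)) ((c ^ 2) • fderiv ℝ D.L v) v :=
    h3.congr_of_eventuallyEq heq.symm
  have h5 := h2.unique h4
  ext u
  have := congrArg (fun T : V →L[ℝ] ℝ => T u) h5
  simp only [ContinuousLinearMap.comp_apply, ContinuousLinearMap.smul_apply,
    ContinuousLinearMap.id_apply, ContinuousLinearMap.coe_smul', Pi.smul_apply,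
    smul_eq_mul, map_smul] at this ⊢
  nlinarith [this]

theorem PF.euler {v : V} (hv : v ∈ D.A) :
    fderiv ℝ (fderiv ℝ D.L) v v = fderiv ℝ D.L v := by
  have h1 := PF.outer_hasDerivAt D hv v
  have heq : (fun s : ℝ => fderiv ℝ D.L (v + s • v)) =ᶠ[nhds (0:ℝ)]
      (fun s : ℝ => (1 + s) • fderiv ℝ D.L v) := by
    have : ∀ᶠ s : ℝ in nhds 0, 0 < 1 + s := by
      have : Set.Ioi (-1 : ℝ) ∈ nhds (0:ℝ) := Ioi_mem_nhds (by norm_num)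
      filter_upwards [this] with s hs
      linarith [Set.mem_Ioi.mp hs]
    filter_upwards [this] with s hs
    have : v + s • v = (1 + s) • v := by rw [add_smul, one_smul]
    rw [this, PF.fderiv_homog D hv hs]
  have h2 : HasDerivAt (fun s : ℝ => (1 + s) • fderiv ℝ D.L v) (fderiv ℝ D.L v) 0 := by
    simpa using (((hasDerivAt_id (0:ℝ)).const_add 1).smul_const (fderiv ℝ D.L v))
  have h3 : HasDerivAt (fun s : ℝ => fderiv ℝ D.L (v + s • v)) (fderiv ℝ D.L v) 0 :=
    h2.congr_of_eventuallyEq heq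
  exact h1.unique h3

theorem PF.g_diag {v : V} (hv : v ∈ D.A) (h : V) :
    D.g v v h = (1 / 2) * fderiv ℝ D.L v h := by
  rw [PF.g_eq_second_fderiv D hv v h, PF.euler D hv]

end Aux

/-- the map `f : A → 𝒱*`, `f(v) = (g_v(v,·))|_𝒱`, is smooth, its Fréchet
derivative at each `v ∈ A` is the surjective linear map `u ↦ (g_v(u,·))|_𝒱`, and the set
of horizontal admissible vectors equals `A ∩ f⁻¹(0)`. -/
theorem stmt3 {V : Type*}
    [NormedAddCommGroup V] [NormedSpace ℝ V] [FiniteDimensional ℝ V]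
    (D : PseudoFinslerData V) (𝒱 : Submodule ℝ V) (r : ℕ)
    (hr : Module.finrank ℝ 𝒱 = r) :
    ContDiffOn ℝ (⊤ : ℕ∞)
      (fun v => LinearMap.toContinuousLinearMap ((D.g v v).domRestrict 𝒱)) D.A ∧
    (∀ v ∈ D.A,
      HasFDerivAt (fun v => LinearMap.toContinuousLinearMap ((D.g v v).domRestrict 𝒱))
        (LinearMap.toContinuousLinearMap (fDeriv D 𝒱 v)) v ∧
      Function.Surjective (fDeriv D 𝒱 v)) ∧
    {v | v ∈ D.A ∧ ∀ w ∈ 𝒱, D.g v v w = 0}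
      = D.A ∩ (fun v => LinearMap.toContinuousLinearMap ((D.g v v).domRestrict 𝒱)) ⁻¹' {0} := by
  classical
  have key : ∀ v ∈ D.A, LinearMap.toContinuousLinearMap ((D.g v v).domRestrict 𝒱)
      = ((1 / 2 : ℝ) • fderiv ℝ D.L v).comp 𝒱.subtypeL := by
    intro v hv
    ext w
    simp only [LinearMap.coe_toContinuousLinearMap', LinearMap.domRestrict_apply,
      ContinuousLinearMap.comp_apply, Submodule.subtypeL_apply,
      ContinuousLinearMap.coe_smul', Pi.smul_apply, smul_eq_mul,
      ContinuousLinearMap.smul_apply]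
    exact PF.g_diag D hv w
  refine ⟨?_, ?_, ?_⟩
  · have hfd : ContDiffOn ℝ (⊤ : ℕ∞) (fderiv ℝ D.L) D.A :=
      D.L_smooth.fderiv_of_isOpen D.A_open (mod_cast le_top)
    have h1 : ContDiffOn ℝ (⊤ : ℕ∞)
        (fun v => ((1 / 2 : ℝ) • fderiv ℝ D.L v).comp 𝒱.subtypeL) D.A :=
      (hfd.const_smul (1 / 2 : ℝ)).clm_comp contDiffOn_const
    exact h1.congr key
  · intro v hv
    constructor
    · have hF : HasFDerivAt (fderiv ℝ D.L) (fderiv ℝ (fderiv ℝ D.L) v) v := by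
        have h0 : ContDiffAt ℝ (⊤ : ℕ∞) (fderiv ℝ D.L) v :=
          (PF.contDiffAt D hv).fderiv_right (mod_cast le_top)
        exact (h0.differentiableAt (by simp)).hasFDerivAt
      have h1 : HasFDerivAt (fun x => (1 / 2 : ℝ) • fderiv ℝ D.L x)
          ((1 / 2 : ℝ) • fderiv ℝ (fderiv ℝ D.L) v) v := by exact hF.const_smul (1 / 2 : ℝ)
      have hconst : HasFDerivAt (fun _ : V => (𝒱.subtypeL : 𝒱 →L[ℝ] V))
          (0 : V →L[ℝ] (𝒱 →L[ℝ] V)) v := hasFDerivAt_const _ _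
      have h2 : HasFDerivAt (fun x => ((1 / 2 : ℝ) • fderiv ℝ D.L x).comp 𝒱.subtypeL)
          ((ContinuousLinearMap.compL ℝ 𝒱 V ℝ ((1 / 2 : ℝ) • fderiv ℝ D.L v)).comp
              (0 : V →L[ℝ] (𝒱 →L[ℝ] V)) +
            ((ContinuousLinearMap.compL ℝ 𝒱 V ℝ).flip 𝒱.subtypeL).comp
              ((1 / 2 : ℝ) • fderiv ℝ (fderiv ℝ D.L) v)) v := h1.clm_comp hconst
      have heq2 : (fun v => LinearMap.toContinuousLinearMap ((D.g v v).domRestrict 𝒱))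
          =ᶠ[nhds v] (fun x => ((1 / 2 : ℝ) • fderiv ℝ D.L x).comp 𝒱.subtypeL) := by
        filter_upwards [D.A_open.mem_nhds hv] with x hx
        exact key x hx
      have h3 := h2.congr_of_eventuallyEq heq2
      have hD : LinearMap.toContinuousLinearMap (fDeriv D 𝒱 v)
          = ((ContinuousLinearMap.compL ℝ 𝒱 V ℝ ((1 / 2 : ℝ) • fderiv ℝ D.L v)).comp
              (0 : V →L[ℝ] (𝒱 →L[ℝ] V)) +
            ((ContinuousLinearMap.compL ℝ 𝒱 V ℝ).flip 𝒱.subtypeL).comp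
              ((1 / 2 : ℝ) • fderiv ℝ (fderiv ℝ D.L) v)) := by
        ext u w
        simp only [LinearMap.coe_toContinuousLinearMap', fDeriv, LinearMap.coe_mk,
          AddHom.coe_mk, LinearMap.domRestrict_apply, ContinuousLinearMap.add_apply,
          ContinuousLinearMap.comp_apply, ContinuousLinearMap.zero_apply, map_zero,
          ContinuousLinearMap.flip_apply, ContinuousLinearMap.compL_apply,
          ContinuousLinearMap.coe_smul', Pi.smul_apply, ContinuousLinearMap.smul_apply,
          Submodule.subtypeL_apply, smul_eq_mul, zero_add,
          ContinuousLinearMap.zero_comp]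
        exact PF.g_eq_second_fderiv D hv u w
      rw [hD]
      exact h3
    · intro φ
      have nd : LinearMap.BilinForm.Nondegenerate (D.g v) := by
        refine ⟨fun e he => D.g_nondeg v hv e he, fun e he => D.g_nondeg v hv e (fun h => (D.g_symm v hv e h).trans (he h))⟩
      obtain ⟨ψ, hψ⟩ := LinearMap.exists_extend (φ : 𝒱 →ₗ[ℝ] ℝ)
      refine ⟨(LinearMap.BilinForm.toDual (D.g v) nd).symm ψ, ?_⟩
      ext w
      have h1 : D.g v ((LinearMap.BilinForm.toDual (D.g v) nd).symm ψ) (w : V) = ψ (w : V) := by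
        have := (LinearMap.BilinForm.toDual (D.g v) nd).apply_symm_apply ψ
        exact DFunLike.congr_fun this (w : V)
      have h2 : ψ (w : V) = φ w := DFunLike.congr_fun hψ w
      simpa [fDeriv] using h1.trans h2
  · ext v
    have hiff : (LinearMap.toContinuousLinearMap ((D.g v v).domRestrict 𝒱) = 0)
        ↔ ∀ w ∈ 𝒱, D.g v v w = 0 := by
      constructor
      · intro h w hw
        have := DFunLike.congr_fun h (⟨w, hw⟩ : 𝒱)
        simpa using this
      · intro h
        ext w
        simpa using h w w.2
    simp only [Set.mem_setOf_eq, Set.mem_inter_iff, Set.mem_preimage, Set.mem_singleton_iff]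
    rw [hiff]
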